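/- For every integer d ≥ 5, the second derived subgroup of the Fabrykowski–Gupta group equals its second level stabilizer, Γ_d'' = Stab_{Γ_d}(2); consequently the index [Γ_d' : Γ_d''] equals d^{d−1}. -/

import Mathlib

namespace FG

variable (d : ℕ) [NeZero d]

/-- The rooted-tree automorphism `a` of the `d`-regular rooted tree (vertex set: the free
monoid `{0,…,d-1}^*`), acting by `(x w)^a = ((x+1) mod d) w`. -/
def aFun : List (Fin d) → List (Fin d)
  | [] => []
  | x :: w => (x + 1) :: w

def aInv : List (Fin d) → List (Fin d)
  | [] => []
  | x :: w => (x - 1) :: w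

lemma aInv_aFun : ∀ w, aInv d (aFun d w) = w := by
  intro w; cases w <;> simp [aFun, aInv]

lemma aFun_aInv : ∀ w, aFun d (aInv d w) = w := by
  intro w; cases w <;> simp [aFun, aInv]

def aPerm : Equiv.Perm (List (Fin d)) :=
  ⟨aFun d, aInv d, aInv_aFun d, aFun_aInv d⟩

/-- The rooted-tree automorphism `r`:
`(0 w)^r = 0 w^a`, `(x w)^r = x w` for `1 ≤ x ≤ d-2`, `((d-1) w)^r = (d-1) w^r`. -/
def rFun : List (Fin d) → List (Fin d)
  | [] => []
  | x :: w => if x = 0 then x :: aFun d w else if x = -1 then x :: rFun w else x :: w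

def rInv : List (Fin d) → List (Fin d)
  | [] => []
  | x :: w => if x = 0 then x :: aInv d w else if x = -1 then x :: rInv w else x :: w

lemma rInv_rFun : ∀ w, rInv d (rFun d w) = w := by
  intro w
  induction w with
  | nil => simp [rFun, rInv]
  | cons x w ih =>
    by_cases h0 : x = 0
    · simp [rFun, rInv, h0, aInv_aFun]
    · by_cases h1 : x = -1
      · subst h1
        have hd : ¬ d = 1 := by simpa using h0
        simp [rFun, rInv, hd, ih]
      · simp [rFun, rInv, h0, h1]

lemma rFun_rInv : ∀ w, rFun d (rInv d w) = w := by
  intro w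
  induction w with
  | nil => simp [rFun, rInv]
  | cons x w ih =>
    by_cases h0 : x = 0
    · simp [rFun, rInv, h0, aFun_aInv]
    · by_cases h1 : x = -1
      · subst h1
        have hd : ¬ d = 1 := by simpa using h0
        simp [rFun, rInv, hd, ih]
      · simp [rFun, rInv, h0, h1]

def rPerm : Equiv.Perm (List (Fin d)) :=
  ⟨rFun d, rInv d, rInv_rFun d, rFun_rInv d⟩

/-- The Fabrykowski–Gupta group `Γ_d`, as the subgroup of the permutation group of the
free monoid `{0,…,d-1}^*` generated by the tree automorphisms `a` and `r`. -/
def Gamma : Subgroup (Equiv.Perm (List (Fin d))) :=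
  Subgroup.closure {aPerm d, rPerm d}

/-- The generator `a` as an element of `Γ_d`. -/
def aG : ↥(Gamma d) :=
  ⟨aPerm d, Subgroup.subset_closure (Set.mem_insert _ _)⟩

/-- The generator `r` as an element of `Γ_d`. -/
def rG : ↥(Gamma d) :=
  ⟨rPerm d, Subgroup.subset_closure (Set.mem_insert_iff.mpr (Or.inr rfl))⟩

/-- The `n`-th level stabilizer `Stab_{Γ_d}(n)`: all elements of `Γ_d` fixing every word
of length `n`. -/
def Stab (n : ℕ) : Subgroup ↥(Gamma d) where
  carrier := { g | ∀ w : List (Fin d), w.length = n → (g : Equiv.Perm (List (Fin d))) w = w }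
  one_mem' := by intro w _; rfl
  mul_mem' := by
    intro g h hg hh w hw
    have : ((g * h : ↥(Gamma d)) : Equiv.Perm (List (Fin d))) w
        = (g : Equiv.Perm (List (Fin d))) ((h : Equiv.Perm (List (Fin d))) w) := rfl
    rw [this, hh w hw, hg w hw]
  inv_mem' := by
    intro g hg w hw
    have h1 := hg w hw
    calc ((g⁻¹ : ↥(Gamma d)) : Equiv.Perm (List (Fin d))) w
        = (g : Equiv.Perm (List (Fin d)))⁻¹ ((g : Equiv.Perm (List (Fin d))) w) := by
          rw [h1]; rfl
      _ = w := Equiv.symm_apply_apply _ _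

/-- The conjugate `g_i = r^{a^i} = a^{-i} r a^i` in `Γ_d`. -/
def gG (i : ℕ) : ↥(Gamma d) := (aG d ^ i)⁻¹ * rG d * aG d ^ i

end FG

open scoped commutatorElement Fin.NatCast Fin.CommRing

lemma FG.perm_apply_inv_self' {α : Type*} (f : Equiv.Perm α) (x : α) : f (f⁻¹ x) = x :=
  Equiv.apply_symm_apply f x

namespace FG

variable {d : ℕ} [NeZero d]

lemma aPerm_nil : aPerm d [] = [] := rfl
lemma aPerm_cons (x : Fin d) (w : List (Fin d)) : aPerm d (x :: w) = (x+1) :: w := rfl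
lemma rPerm_apply (w : List (Fin d)) : rPerm d w = rFun d w := rfl
lemma rPerm_nil : rPerm d [] = [] := rfl
lemma rPerm_cons (x : Fin d) (w : List (Fin d)) :
    rPerm d (x :: w) = if x = 0 then x :: aFun d w else if x = -1 then x :: rFun d w else x :: w := rfl

lemma aPerm_pow_nil (n : ℕ) : (aPerm d ^ n) [] = [] := by
  induction n with
  | zero => rfl
  | succ n ih => rw [pow_succ, Equiv.Perm.mul_apply]; simp [aPerm_nil, ih]

lemma aPerm_pow_cons (n : ℕ) (x : Fin d) (w : List (Fin d)) :
    (aPerm d ^ n) (x :: w) = (x + n) :: w := by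
  induction n generalizing x with
  | zero => simp
  | succ n ih =>
    rw [pow_succ', Equiv.Perm.mul_apply, ih, aPerm_cons]
    congr 1
    push_cast
    ring

lemma aPerm_pow_d : aPerm d ^ d = 1 := by
  ext w
  cases w with
  | nil => simp [aPerm_pow_nil]
  | cons x w => simp [aPerm_pow_cons, Fin.natCast_self]

lemma rPerm_pow_nil (n : ℕ) : (rPerm d ^ n) [] = [] := by
  induction n with
  | zero => rfl
  | succ n ih => rw [pow_succ', Equiv.Perm.mul_apply]; simp [rPerm_nil, ih]

lemma rPerm_pow_cons (n : ℕ) (x : Fin d) (w : List (Fin d)) :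
    (rPerm d ^ n) (x :: w) =
      if x = 0 then x :: (aPerm d ^ n) w else if x = -1 then x :: (rPerm d ^ n) w else x :: w := by
  induction n with
  | zero => split_ifs <;> rfl
  | succ n ih =>
    rw [pow_succ', Equiv.Perm.mul_apply, ih]
    split_ifs with h1 h2
    · rw [rPerm_cons, if_pos h1, pow_succ', Equiv.Perm.mul_apply]; rfl
    · rw [rPerm_cons, if_neg h1, if_pos h2]; rfl
    · rw [rPerm_cons, if_neg h1, if_neg h2]

lemma rPerm_pow_d : rPerm d ^ d = 1 := by
  apply Equiv.ext
  intro w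
  show (rPerm d ^ d) w = w
  induction w with
  | nil => simp [rPerm_pow_nil]
  | cons x w ih =>
    rw [rPerm_pow_cons]
    split_ifs with h1 h2
    · have h : (aPerm d ^ d) w = w := by rw [aPerm_pow_d]; rfl
      rw [h]
    · rw [ih]
    · rfl

end FG
namespace FG

variable {d : ℕ} [NeZero d]

lemma coe_mul_apply (g h : ↥(Gamma d)) (w : List (Fin d)) :
    ((g * h : ↥(Gamma d)) : Equiv.Perm (List (Fin d))) w
      = (g : Equiv.Perm (List (Fin d))) ((h : Equiv.Perm (List (Fin d))) w) := rfl

lemma fix_nil (g : ↥(Gamma d)) : (g : Equiv.Perm (List (Fin d))) [] = [] := by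
  obtain ⟨p, hp⟩ := g
  show p [] = []
  induction hp using Subgroup.closure_induction with
  | mem x hx =>
    rcases Set.mem_insert_iff.mp hx with h | h
    · rw [h]; rfl
    · rw [Set.mem_singleton_iff.mp h]; rfl
  | one => rfl
  | mul x y hx hy ihx ihy => rw [Equiv.Perm.mul_apply, ihy, ihx]
  | inv x hx ih =>
    have := ih
    calc x⁻¹ [] = x⁻¹ (x []) := by rw [this]
    _ = [] := Equiv.symm_apply_apply _ _

lemma exists_decomp (g : ↥(Gamma d)) :
    ∃ (c : Fin d) (s : Fin d → ↥(Gamma d)), ∀ (i : Fin d) (w : List (Fin d)),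
      (g : Equiv.Perm (List (Fin d))) (i :: w) = (i + c) :: ((s i : Equiv.Perm (List (Fin d))) w) := by
  obtain ⟨p, hp⟩ := g
  show ∃ c s, ∀ i w, p (i :: w) = (i + c) :: _
  induction hp using Subgroup.closure_induction with
  | mem x hx =>
    rcases Set.mem_insert_iff.mp hx with h | h
    · refine ⟨1, fun _ => 1, fun i w => ?_⟩
      rw [h, aPerm_cons]; rfl
    · rw [Set.mem_singleton_iff.mp h]
      refine ⟨0, fun i => if i = 0 then aG d else if i = -1 then rG d else 1, fun i w => ?_⟩
      rw [rPerm_cons]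
      split_ifs with h1 h2
      · rw [add_zero]; simp only [if_pos h1]; rfl
      · rw [add_zero]; simp only [if_neg h1, if_pos h2]; rfl
      · rw [add_zero]; simp only [if_neg h1, if_neg h2]; rfl
  | one => exact ⟨0, fun _ => 1, fun i w => by simp⟩
  | mul x y hx hy ihx ihy =>
    obtain ⟨c, s, hcs⟩ := ihx
    obtain ⟨c', s', hcs'⟩ := ihy
    refine ⟨c' + c, fun i => s (i + c') * s' i, fun i w => ?_⟩
    rw [Equiv.Perm.mul_apply, hcs', hcs, coe_mul_apply, add_assoc]
  | inv x hx ih =>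
    obtain ⟨c, s, hcs⟩ := ih
    refine ⟨-c, fun i => (s (i + -c))⁻¹, fun i w => ?_⟩
    apply x.injective
    rw [perm_apply_inv_self', hcs]
    congr 1
    · ring
    · show _ = (((s (i + -c)) : Equiv.Perm (List (Fin d))) * ((s (i + -c))⁻¹ : ↥(Gamma d) ) ) w
      rw [← Subgroup.coe_mul, mul_inv_cancel]
      rfl

noncomputable def cOf (g : ↥(Gamma d)) : Fin d := (exists_decomp g).choose

noncomputable def sOf (g : ↥(Gamma d)) : Fin d → ↥(Gamma d) :=
  (exists_decomp g).choose_spec.choose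

lemma decomp_spec (g : ↥(Gamma d)) : ∀ (i : Fin d) (w : List (Fin d)),
    (g : Equiv.Perm (List (Fin d))) (i :: w) = (i + cOf g) :: ((sOf g i : Equiv.Perm (List (Fin d))) w) :=
  (exists_decomp g).choose_spec.choose_spec

lemma decomp_unique (g : ↥(Gamma d)) (c : Fin d) (s : Fin d → ↥(Gamma d))
    (h : ∀ (i : Fin d) (w : List (Fin d)),
      (g : Equiv.Perm (List (Fin d))) (i :: w) = (i + c) :: ((s i : Equiv.Perm (List (Fin d))) w)) :
    cOf g = c ∧ sOf g = s := by
  have h0 := h 0 []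
  rw [decomp_spec g 0 []] at h0
  have hc : cOf g = c := by
    have := List.head_eq_of_cons_eq h0
    simpa using this
  refine ⟨hc, funext fun i => ?_⟩
  apply Subtype.ext
  apply Equiv.ext
  intro w
  have h1 := h i w
  rw [decomp_spec g i w, hc] at h1
  exact List.tail_eq_of_cons_eq h1

lemma ext_of_decomp (g h : ↥(Gamma d)) (hc : cOf g = cOf h) (hs : sOf g = sOf h) : g = h := by
  apply Subtype.ext
  apply Equiv.ext
  intro w
  cases w with
  | nil => rw [fix_nil, fix_nil]
  | cons i w => rw [decomp_spec, decomp_spec, hc, hs]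

lemma cOf_mul (g h : ↥(Gamma d)) : cOf (g * h) = cOf h + cOf g :=
  (decomp_unique _ _ (fun i => sOf g (i + cOf h) * sOf h i) (fun i w => by
    rw [coe_mul_apply, decomp_spec h, decomp_spec g, coe_mul_apply, add_assoc])).1

lemma sOf_mul (g h : ↥(Gamma d)) : sOf (g * h) = fun i => sOf g (i + cOf h) * sOf h i :=
  (decomp_unique _ (cOf h + cOf g) (fun i => sOf g (i + cOf h) * sOf h i) (fun i w => by
    rw [coe_mul_apply, decomp_spec h, decomp_spec g, coe_mul_apply, add_assoc])).2

lemma cOf_one : cOf (1 : ↥(Gamma d)) = 0 :=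
  (decomp_unique _ 0 (fun _ => 1) (fun i w => by simp)).1

lemma sOf_one : sOf (1 : ↥(Gamma d)) = fun _ => 1 :=
  (decomp_unique _ 0 (fun _ => 1) (fun i w => by simp)).2

lemma inv_decomp (g : ↥(Gamma d)) : ∀ (i : Fin d) (w : List (Fin d)),
    ((g⁻¹ : ↥(Gamma d)) : Equiv.Perm (List (Fin d))) (i :: w)
      = (i + -cOf g) :: (((sOf g (i + -cOf g))⁻¹ : ↥(Gamma d)) : Equiv.Perm (List (Fin d))) w := by
  intro i w
  show (g : Equiv.Perm (List (Fin d)))⁻¹ _ = _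
  apply (g : Equiv.Perm (List (Fin d))).injective
  rw [perm_apply_inv_self', decomp_spec]
  congr 1
  · ring
  · show _ = (((sOf g (i + -cOf g)) : Equiv.Perm (List (Fin d))) * (((sOf g (i + -cOf g))⁻¹ : ↥(Gamma d)) : Equiv.Perm (List (Fin d)))) w
    rw [← Subgroup.coe_mul, mul_inv_cancel]
    rfl

lemma cOf_inv (g : ↥(Gamma d)) : cOf g⁻¹ = -cOf g :=
  (decomp_unique _ _ _ (inv_decomp g)).1

lemma sOf_inv (g : ↥(Gamma d)) : sOf g⁻¹ = fun i => (sOf g (i + -cOf g))⁻¹ :=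
  (decomp_unique _ _ _ (inv_decomp g)).2

lemma cOf_aG : cOf (aG d) = 1 :=
  (decomp_unique _ 1 (fun _ => 1) (fun i w => by rw [show ((aG d : ↥(Gamma d)) : Equiv.Perm (List (Fin d))) = aPerm d from rfl, aPerm_cons]; rfl)).1

lemma sOf_aG : sOf (aG d) = fun _ => 1 :=
  (decomp_unique _ 1 (fun _ => 1) (fun i w => by rw [show ((aG d : ↥(Gamma d)) : Equiv.Perm (List (Fin d))) = aPerm d from rfl, aPerm_cons]; rfl)).2

/-- section function of `r`. -/
noncomputable def rSec (k : Fin d) : ↥(Gamma d) :=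
  if k = 0 then aG d else if k = -1 then rG d else 1

lemma rG_decomp : ∀ (i : Fin d) (w : List (Fin d)),
    ((rG d : ↥(Gamma d)) : Equiv.Perm (List (Fin d))) (i :: w)
      = (i + 0) :: ((rSec i : Equiv.Perm (List (Fin d))) w) := by
  intro i w
  show rPerm d (i :: w) = _
  rw [rPerm_cons]
  unfold rSec
  split_ifs with h1 h2
  · rw [add_zero]; rfl
  · rw [add_zero]; rfl
  · rw [add_zero]; rfl

lemma cOf_rG : cOf (rG d) = 0 := (decomp_unique _ _ _ rG_decomp).1
lemma sOf_rG : sOf (rG d) = rSec := (decomp_unique _ _ _ rG_decomp).2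

end FG
namespace FG

variable {d : ℕ} [NeZero d]

lemma mem_stab_one_iff (g : ↥(Gamma d)) : g ∈ Stab d 1 ↔ cOf g = 0 := by
  constructor
  · intro hg
    have h := hg [0] rfl
    rw [show ([0] : List (Fin d)) = 0 :: [] from rfl, decomp_spec] at h
    have := List.head_eq_of_cons_eq h
    simpa using this
  · intro hc w hw
    match w, hw with
    | [i], _ =>
      rw [show ([i] : List (Fin d)) = i :: [] from rfl, decomp_spec, hc, add_zero, fix_nil]

lemma mem_stab_two_iff (g : ↥(Gamma d)) :
    g ∈ Stab d 2 ↔ cOf g = 0 ∧ ∀ i, cOf (sOf g i) = 0 := by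
  constructor
  · intro hg
    have key : ∀ i x : Fin d, (i + cOf g) :: ((sOf g i : Equiv.Perm (List (Fin d))) [x]) = [i, x] := by
      intro i x
      have h := hg [i, x] rfl
      rwa [show ([i, x] : List (Fin d)) = i :: [x] from rfl, decomp_spec] at h
    have hc : cOf g = 0 := by
      have := List.head_eq_of_cons_eq (key 0 0)
      simpa using this
    refine ⟨hc, fun i => ?_⟩
    have h2 := List.tail_eq_of_cons_eq (key i 0)
    rw [show ((sOf g i : Equiv.Perm (List (Fin d))) [0]) = (sOf g i : Equiv.Perm (List (Fin d))) (0 :: []) from rfl,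
      decomp_spec] at h2
    have := List.head_eq_of_cons_eq h2
    simpa using this
  · rintro ⟨hc, hs⟩ w hw
    match w, hw with
    | [i, x], _ =>
      rw [show ([i, x] : List (Fin d)) = i :: [x] from rfl, decomp_spec, hc, add_zero,
        show ((sOf g i : Equiv.Perm (List (Fin d))) [x]) = (sOf g i : Equiv.Perm (List (Fin d))) (x :: []) from rfl,
        decomp_spec, hs, add_zero, fix_nil]

lemma cOf_commutator (g h : ↥(Gamma d)) : cOf ⁅g, h⁆ = 0 := by
  rw [commutatorElement_def, cOf_mul, cOf_mul, cOf_mul, cOf_inv, cOf_inv]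
  abel

lemma sOf_mul_of_zero {g h : ↥(Gamma d)} (hh : cOf h = 0) (i : Fin d) :
    sOf (g * h) i = sOf g i * sOf h i := by
  rw [sOf_mul]; simp only [hh, add_zero]

lemma sOf_inv_of_zero {g : ↥(Gamma d)} (hg : cOf g = 0) (i : Fin d) :
    sOf g⁻¹ i = (sOf g i)⁻¹ := by
  rw [sOf_inv]; simp only [hg, neg_zero, add_zero]

lemma sOf_commutator {g h : ↥(Gamma d)} (hg : cOf g = 0) (hh : cOf h = 0) (i : Fin d) :
    sOf ⁅g, h⁆ i = ⁅sOf g i, sOf h i⁆ := by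
  have hginv : cOf g⁻¹ = 0 := by rw [cOf_inv, hg, neg_zero]
  have hhinv : cOf h⁻¹ = 0 := by rw [cOf_inv, hh, neg_zero]
  rw [commutatorElement_def, commutatorElement_def,
    sOf_mul_of_zero hhinv, sOf_mul_of_zero hginv, sOf_mul_of_zero hh,
    sOf_inv_of_zero hg, sOf_inv_of_zero hh]

lemma derived_one_eq : derivedSeries ↥(Gamma d) 1 = ⁅(⊤ : Subgroup ↥(Gamma d)), ⊤⁆ := by
  rw [derivedSeries_succ, derivedSeries_zero]

lemma derived_one_le_stab_one : derivedSeries ↥(Gamma d) 1 ≤ Stab d 1 := by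
  rw [derived_one_eq]
  exact Subgroup.commutator_le.mpr fun g _ h _ => (mem_stab_one_iff _).mpr (cOf_commutator g h)

lemma derived_two_le_stab_two : derivedSeries ↥(Gamma d) 2 ≤ Stab d 2 := by
  rw [derivedSeries_succ]
  refine Subgroup.commutator_le.mpr fun g hg h hh => ?_
  have hcg : cOf g = 0 := (mem_stab_one_iff g).mp (derived_one_le_stab_one hg)
  have hch : cOf h = 0 := (mem_stab_one_iff h).mp (derived_one_le_stab_one hh)
  rw [mem_stab_two_iff]
  exact ⟨cOf_commutator g h, fun i => by rw [sOf_commutator hcg hch]; exact cOf_commutator _ _⟩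

lemma aG_pow_d : (aG d) ^ d = 1 := by
  apply Subtype.ext
  rw [SubmonoidClass.coe_pow]
  exact aPerm_pow_d

lemma rG_pow_d : (rG d) ^ d = 1 := by
  apply Subtype.ext
  rw [SubmonoidClass.coe_pow]
  exact rPerm_pow_d

lemma cOf_aG_pow (n : ℕ) : cOf ((aG d) ^ n) = (n : Fin d) := by
  induction n with
  | zero => rw [pow_zero, cOf_one]; simp
  | succ n ih => rw [pow_succ, cOf_mul, cOf_aG, ih]; push_cast; ring

lemma sOf_aG_pow (n : ℕ) (i : Fin d) : sOf ((aG d) ^ n) i = 1 := by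
  induction n generalizing i with
  | zero => rw [pow_zero, sOf_one]
  | succ n ih => rw [pow_succ, sOf_mul, cOf_aG, sOf_aG]; simp [ih]

lemma gG_mod (i : ℕ) : gG d i = gG d (i % d) := by
  unfold gG
  have key : (aG d) ^ i = (aG d) ^ (i % d) := by
    conv_lhs => rw [← Nat.mod_add_div i d, pow_add, pow_mul, aG_pow_d, one_pow, mul_one]
  rw [key]

lemma cOf_gG (i : ℕ) : cOf (gG d i) = 0 := by
  unfold gG
  rw [cOf_mul, cOf_mul, cOf_inv, cOf_aG_pow, cOf_rG]
  abel

lemma gG_decomp (i : ℕ) : ∀ (j : Fin d) (w : List (Fin d)),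
    ((gG d i : ↥(Gamma d)) : Equiv.Perm (List (Fin d))) (j :: w)
      = (j + 0) :: ((rSec (j + (i : Fin d)) : Equiv.Perm (List (Fin d))) w) := by
  intro j w
  unfold gG
  rw [coe_mul_apply, coe_mul_apply]
  have hpow : ((aG d ^ i : ↥(Gamma d)) : Equiv.Perm (List (Fin d))) = aPerm d ^ i := by
    rw [SubmonoidClass.coe_pow]; rfl
  have hpowinv : (((aG d ^ i)⁻¹ : ↥(Gamma d)) : Equiv.Perm (List (Fin d))) = (aPerm d ^ i)⁻¹ := by
    rw [← hpow]; rfl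
  rw [hpow, aPerm_pow_cons, rG_decomp, add_zero, hpowinv]
  apply (aPerm d ^ i).injective
  rw [perm_apply_inv_self', aPerm_pow_cons, add_zero]

lemma sOf_gG (i : ℕ) : sOf (gG d i) = fun j => rSec (j + (i : Fin d)) :=
  (decomp_unique _ 0 _ (gG_decomp i)).2

lemma sOf_mul_apply (g h : ↥(Gamma d)) (i : Fin d) :
    sOf (g * h) i = sOf g (i + cOf h) * sOf h i := by rw [sOf_mul]

lemma sOf_inv_apply (g : ↥(Gamma d)) (i : Fin d) :
    sOf g⁻¹ i = (sOf g (i + -cOf g))⁻¹ := by rw [sOf_inv]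

end FG
namespace FG

variable {d : ℕ} [NeZero d]

/-- The subgroup generated by the `g_i`. -/
def Hsub (d : ℕ) [NeZero d] : Subgroup ↥(Gamma d) :=
  Subgroup.closure (Set.range (fun i : ℕ => gG d i))

lemma gG_mem_H (i : ℕ) : gG d i ∈ Hsub d :=
  Subgroup.subset_closure ⟨i, rfl⟩

lemma H_le_stab_one : Hsub d ≤ Stab d 1 := by
  rw [Hsub, Subgroup.closure_le]
  rintro x ⟨i, rfl⟩
  exact (mem_stab_one_iff _).mpr (cOf_gG i)

lemma gG_zero : gG d 0 = rG d := by
  unfold gG; simp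

lemma aG_pow_sub_one : aG d ^ (d - 1) = (aG d)⁻¹ := by
  apply eq_inv_of_mul_eq_one_right
  have : aG d * aG d ^ (d-1) = aG d ^ d := by
    rw [← pow_succ']
    congr 1
    have hd : d ≠ 0 := NeZero.ne d
    omega
  rw [this, aG_pow_d]

lemma aG_inv_conj_gG (i : ℕ) : (aG d)⁻¹ * gG d i * aG d = gG d (i + 1) := by
  unfold gG
  rw [pow_succ]
  group

lemma aG_conj_gG (i : ℕ) : aG d * gG d i * (aG d)⁻¹ = gG d (i + (d - 1)) := by
  unfold gG
  rw [pow_add, aG_pow_sub_one]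
  group

lemma conj_aG_mem_H {h : ↥(Gamma d)} (hh : h ∈ Hsub d) : aG d * h * (aG d)⁻¹ ∈ Hsub d := by
  induction hh using Subgroup.closure_induction with
  | mem x hx =>
    obtain ⟨i, rfl⟩ := hx
    rw [aG_conj_gG]
    exact gG_mem_H _
  | one => simpa using one_mem _
  | mul x y hx hy ihx ihy =>
    have : aG d * (x * y) * (aG d)⁻¹ = (aG d * x * (aG d)⁻¹) * (aG d * y * (aG d)⁻¹) := by group
    rw [this]; exact mul_mem ihx ihy
  | inv x hx ih =>
    have : aG d * x⁻¹ * (aG d)⁻¹ = (aG d * x * (aG d)⁻¹)⁻¹ := by group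
    rw [this]; exact inv_mem ih

lemma conj_aG_inv_mem_H {h : ↥(Gamma d)} (hh : h ∈ Hsub d) : (aG d)⁻¹ * h * aG d ∈ Hsub d := by
  induction hh using Subgroup.closure_induction with
  | mem x hx =>
    obtain ⟨i, rfl⟩ := hx
    rw [aG_inv_conj_gG]
    exact gG_mem_H _
  | one => simpa using one_mem _
  | mul x y hx hy ihx ihy =>
    have : (aG d)⁻¹ * (x * y) * aG d = ((aG d)⁻¹ * x * aG d) * ((aG d)⁻¹ * y * aG d) := by group
    rw [this]; exact mul_mem ihx ihy
  | inv x hx ih =>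
    have : (aG d)⁻¹ * x⁻¹ * aG d = ((aG d)⁻¹ * x * aG d)⁻¹ := by group
    rw [this]; exact inv_mem ih

lemma conj_aG_pow_mem_H (k : ℕ) {h : ↥(Gamma d)} (hh : h ∈ Hsub d) :
    (aG d) ^ k * h * ((aG d) ^ k)⁻¹ ∈ Hsub d := by
  induction k generalizing h with
  | zero => simpa using hh
  | succ k ih =>
    have : aG d ^ (k+1) * h * (aG d ^ (k+1))⁻¹
        = aG d ^ k * (aG d * h * (aG d)⁻¹) * (aG d ^ k)⁻¹ := by
      rw [pow_succ]; group
    rw [this]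
    exact ih (conj_aG_mem_H hh)

lemma conj_aG_pow_inv_mem_H (k : ℕ) {h : ↥(Gamma d)} (hh : h ∈ Hsub d) :
    ((aG d) ^ k)⁻¹ * h * (aG d) ^ k ∈ Hsub d := by
  induction k generalizing h with
  | zero => simpa using hh
  | succ k ih =>
    have : (aG d ^ (k+1))⁻¹ * h * aG d ^ (k+1)
        = (aG d)⁻¹ * ((aG d ^ k)⁻¹ * h * aG d ^ k) * aG d := by
      rw [pow_succ]; group
    rw [this]
    exact conj_aG_inv_mem_H (ih hh)

lemma aG_pow_inv_eq (k : ℕ) : ((aG d) ^ k)⁻¹ = (aG d) ^ (k * (d - 1)) := by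
  symm
  apply eq_inv_of_mul_eq_one_right
  have : aG d ^ k * aG d ^ (k * (d-1)) = (aG d ^ d) ^ k := by
    rw [← pow_mul, ← pow_add]
    congr 1
    have hd : d ≠ 0 := NeZero.ne d
    cases d with
    | zero => omega
    | succ n => simp only [Nat.add_sub_cancel]; ring
  rw [this, aG_pow_d, one_pow]

lemma exists_rep (g : ↥(Gamma d)) : ∃ (k : ℕ) (m : ↥(Gamma d)), m ∈ Hsub d ∧ g = (aG d) ^ k * m := by
  obtain ⟨p, hp⟩ := g
  induction hp using Subgroup.closure_induction with
  | mem x hx =>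
    rcases Set.mem_insert_iff.mp hx with h | h
    · subst h
      exact ⟨1, 1, one_mem _, by rw [pow_one, mul_one]; rfl⟩
    · rw [Set.mem_singleton_iff] at h
      subst h
      refine ⟨0, gG d 0, gG_mem_H 0, ?_⟩
      rw [pow_zero, one_mul, gG_zero]
      rfl
  | one => exact ⟨0, 1, one_mem _, by rw [pow_zero, mul_one]; rfl⟩
  | mul x y hx hy ihx ihy =>
    obtain ⟨k, m, hm, hxe⟩ := ihx
    obtain ⟨k', m', hm', hye⟩ := ihy
    refine ⟨k + k', ((aG d ^ k')⁻¹ * m * aG d ^ k') * m',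
      mul_mem (conj_aG_pow_inv_mem_H k' hm) hm', ?_⟩
    have : (⟨x * y, _⟩ : ↥(Gamma d)) = (⟨x, hx⟩ : ↥(Gamma d)) * (⟨y, hy⟩ : ↥(Gamma d)) := rfl
    rw [this, hxe, hye, pow_add]
    group
  | inv x hx ih =>
    obtain ⟨k, m, hm, hxe⟩ := ih
    refine ⟨k * (d-1), (aG d ^ (k*(d-1)))⁻¹ * m⁻¹ * aG d ^ (k*(d-1)),
      conj_aG_pow_inv_mem_H _ (inv_mem hm), ?_⟩
    have : (⟨x⁻¹, _⟩ : ↥(Gamma d)) = (⟨x, hx⟩ : ↥(Gamma d))⁻¹ := rfl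
    rw [this, hxe]
    rw [show (aG d) ^ (k * (d-1)) = ((aG d) ^ k)⁻¹ from (aG_pow_inv_eq k).symm]
    group

lemma stab_one_le_H : Stab d 1 ≤ Hsub d := by
  intro g hg
  obtain ⟨k, m, hm, rfl⟩ := exists_rep g
  have hc : cOf ((aG d) ^ k * m) = (k : Fin d) := by
    rw [cOf_mul, (mem_stab_one_iff m).mp (H_le_stab_one hm), cOf_aG_pow, zero_add]
  have : (k : Fin d) = 0 := by rw [← hc]; exact (mem_stab_one_iff _).mp hg
  obtain ⟨t, rfl⟩ := Fin.natCast_eq_zero.mp this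
  rw [pow_mul, aG_pow_d, one_pow, one_mul]
  exact hm

lemma stab_one_eq_H : Stab d 1 = Hsub d := le_antisymm stab_one_le_H H_le_stab_one

end FG
namespace FG

variable {d : ℕ} [NeZero d]

lemma fin_cast_ne_zero {k : ℕ} (h1 : 0 < k) (h2 : k < d) : ((k : ℕ) : Fin d) ≠ 0 := by
  rw [Ne, Fin.natCast_eq_zero]
  intro hdvd
  have := Nat.le_of_dvd h1 hdvd
  omega

lemma fin_pp {a b : ℕ} (hb : b < a) (ha : a < d) : ((a : ℕ) : Fin d) ≠ ((b : ℕ) : Fin d) := by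
  intro h
  have : ((a - b : ℕ) : Fin d) = 0 := by
    push_cast [Nat.cast_sub (le_of_lt hb)]
    rw [sub_eq_zero]
    exact h
  exact fin_cast_ne_zero (by omega) (by omega) this

lemma fin_pn {a b : ℕ} (h0 : 0 < a + b) (h : a + b < d) : ((a : ℕ) : Fin d) ≠ -((b : ℕ) : Fin d) := by
  intro heq
  have : ((a + b : ℕ) : Fin d) = 0 := by
    push_cast
    rw [heq]
    ring
  exact fin_cast_ne_zero h0 h this

section dge5
variable (hd : 5 ≤ d)
include hd

lemma neg_one_ne_zero' : (-1 : Fin d) ≠ 0 := by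
  have := fin_pn (d := d) (a := 0) (b := 1) (by omega) (by omega)
  push_cast at this
  exact fun h => this (by rw [← h])

lemma rSec_zero : rSec (0 : Fin d) = aG d := by unfold rSec; rw [if_pos rfl]

lemma rSec_neg_one : rSec (-1 : Fin d) = rG d := by
  unfold rSec
  rw [if_neg (neg_one_ne_zero' hd), if_pos rfl]

lemma rSec_eq_one_of {k : Fin d} (h0 : k ≠ 0) (h1 : k ≠ -1) : rSec k = 1 := by
  unfold rSec
  rw [if_neg h0, if_neg h1]

lemma one_ne_zero' : (1 : Fin d) ≠ 0 := by
  have := fin_cast_ne_zero (d := d) (k := 1) (by omega) (by omega); push_cast at this; exact this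

lemma one_ne_negone : (1 : Fin d) ≠ -1 := by
  have := fin_pn (d := d) (a := 1) (b := 1) (by omega) (by omega); push_cast at this; exact this

lemma two_ne_zero' : (2 : Fin d) ≠ 0 := by
  have := fin_cast_ne_zero (d := d) (k := 2) (by omega) (by omega); push_cast at this; exact this

lemma two_ne_negone : (2 : Fin d) ≠ -1 := by
  have := fin_pn (d := d) (a := 2) (b := 1) (by omega) (by omega); push_cast at this; exact this

lemma three_ne_zero' : (3 : Fin d) ≠ 0 := by
  have := fin_cast_ne_zero (d := d) (k := 3) (by omega) (by omega); push_cast at this; exact this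

lemma three_ne_negone : (3 : Fin d) ≠ -1 := by
  have := fin_pn (d := d) (a := 3) (b := 1) (by omega) (by omega); push_cast at this; exact this

lemma negtwo_ne_zero : (-2 : Fin d) ≠ 0 := by
  rw [Ne, neg_eq_zero]
  exact two_ne_zero' hd

lemma negtwo_ne_negone : (-2 : Fin d) ≠ -1 := by
  rw [Ne, neg_inj]
  have := fin_pp (d := d) (a := 2) (b := 1) (by omega) (by omega)
  push_cast at this
  exact this

end dge5

/-- `x₁ = g₁⁻¹ g₀ = [a⁻¹, r⁻¹]`. -/
noncomputable def xx1 (d : ℕ) [NeZero d] : ↥(Gamma d) := (gG d 1)⁻¹ * gG d 0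

/-- `x₃ = g₃⁻¹ g₂`. -/
noncomputable def xx3 (d : ℕ) [NeZero d] : ↥(Gamma d) := (gG d 3)⁻¹ * gG d 2

lemma xx1_eq_commutator : xx1 d = ⁅(aG d)⁻¹, (rG d)⁻¹⁆ := by
  unfold xx1 gG
  rw [commutatorElement_def, pow_one, pow_zero]
  group

lemma xx3_eq_conj : xx3 d = (aG d ^ 2)⁻¹ * xx1 d * aG d ^ 2 := by
  unfold xx3 xx1 gG
  rw [pow_zero, pow_one]
  have h3 : aG d ^ 3 = aG d * aG d ^ 2 := by group
  rw [h3]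
  group

lemma xx1_mem_derived_one : xx1 d ∈ derivedSeries ↥(Gamma d) 1 := by
  rw [xx1_eq_commutator, derived_one_eq]
  exact Subgroup.commutator_mem_commutator (Subgroup.mem_top _) (Subgroup.mem_top _)

lemma xx3_mem_derived_one : xx3 d ∈ derivedSeries ↥(Gamma d) 1 := by
  rw [xx3_eq_conj]
  have h := (derivedSeries_normal ↥(Gamma d) 1).conj_mem _ xx1_mem_derived_one (aG d ^ 2)⁻¹
  simpa using h

lemma cOf_xx1 : cOf (xx1 d) = 0 := by
  unfold xx1
  rw [cOf_mul, cOf_inv, cOf_gG, cOf_gG]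
  ring

lemma cOf_xx3 : cOf (xx3 d) = 0 := by
  unfold xx3
  rw [cOf_mul, cOf_inv, cOf_gG, cOf_gG]
  ring

lemma sOf_xx1 (j : Fin d) : sOf (xx1 d) j = (rSec (j + 1))⁻¹ * rSec j := by
  unfold xx1
  rw [sOf_mul, cOf_gG]
  simp only [add_zero]
  rw [sOf_inv, cOf_gG]
  simp only [neg_zero, add_zero]
  rw [sOf_gG, sOf_gG]
  push_cast
  rw [add_zero]

lemma sOf_xx3 (j : Fin d) : sOf (xx3 d) j = (rSec (j + 3))⁻¹ * rSec (j + 2) := by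
  unfold xx3
  rw [sOf_mul, cOf_gG]
  simp only [add_zero]
  rw [sOf_inv, cOf_gG]
  simp only [neg_zero, add_zero]
  rw [sOf_gG, sOf_gG]
  push_cast
  rfl

/-- The seed element `ζ = ⁅x₁, x₃⁆`. -/
noncomputable def zeta (d : ℕ) [NeZero d] : ↥(Gamma d) := ⁅xx1 d, xx3 d⁆

lemma zeta_mem_derived_two : zeta d ∈ derivedSeries ↥(Gamma d) 2 := by
  rw [zeta, derivedSeries_succ]
  exact Subgroup.commutator_mem_commutator xx1_mem_derived_one xx3_mem_derived_one

lemma cOf_zeta : cOf (zeta d) = 0 := cOf_commutator _ _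

lemma sOf_zeta (j : Fin d) : sOf (zeta d) j = ⁅sOf (xx1 d) j, sOf (xx3 d) j⁆ :=
  sOf_commutator cOf_xx1 cOf_xx3 j

section dge5
variable (hd : 5 ≤ d)
include hd

lemma sOf_zeta_support : sOf (zeta d) (-2 : Fin d) = ⁅(rG d)⁻¹, aG d⁆ := by
  rw [sOf_zeta, sOf_xx1, sOf_xx3]
  have e1 : (-2 : Fin d) + 1 = -1 := by ring
  have e2 : (-2 : Fin d) + 3 = 1 := by ring
  have e3 : (-2 : Fin d) + 2 = 0 := by ring
  rw [e1, e2, e3, rSec_neg_one hd, rSec_zero hd,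
    rSec_eq_one_of hd (negtwo_ne_zero hd) (negtwo_ne_negone hd),
    rSec_eq_one_of hd (one_ne_zero' hd) (one_ne_negone hd)]
  rw [mul_one, inv_one, one_mul]

lemma sOf_zeta_off {j : Fin d} (hj : j ≠ -2) : sOf (zeta d) j = 1 := by
  rw [sOf_zeta]
  by_cases hj0 : j = 0
  · subst hj0
    have h03 : (0 : Fin d) + 3 = 3 := by ring
    have h02 : (0 : Fin d) + 2 = 2 := by ring
    rw [sOf_xx3, h03, h02, rSec_eq_one_of hd (three_ne_zero' hd) (three_ne_negone hd),
      rSec_eq_one_of hd (two_ne_zero' hd) (two_ne_negone hd)]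
    simp
  · by_cases hj1 : j = -1
    · subst hj1
      have h13 : (-1 : Fin d) + 3 = 2 := by ring
      have h12 : (-1 : Fin d) + 2 = 1 := by ring
      rw [sOf_xx3, h13, h12, rSec_eq_one_of hd (two_ne_zero' hd) (two_ne_negone hd),
        rSec_eq_one_of hd (one_ne_zero' hd) (one_ne_negone hd)]
      simp
    · have ha : j + 1 ≠ 0 := fun h => hj1 (by
        have := eq_neg_of_add_eq_zero_left h
        simpa using this)
      have hb : j + 1 ≠ -1 := fun h => hj (by linear_combination h)
      rw [sOf_xx1, rSec_eq_one_of hd ha hb, rSec_eq_one_of hd hj0 hj1]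
      simp

end dge5

end FG
namespace FG

variable {d : ℕ} [NeZero d]

lemma exists_section (hd : 5 ≤ d) (p : Equiv.Perm (List (Fin d))) (hp : p ∈ Gamma d) (j : Fin d) :
    ∃ W : ↥(Gamma d), cOf W = 0 ∧ sOf W j = ⟨p, hp⟩ := by
  induction hp using Subgroup.closure_induction with
  | mem x hx =>
    rcases Set.mem_insert_iff.mp hx with h | h
    · subst h
      refine ⟨gG d (d - j.val), cOf_gG _, ?_⟩
      simp only [sOf_gG]
      have hz : j + ((d - j.val : ℕ) : Fin d) = 0 := by
        calc j + ((d - j.val : ℕ) : Fin d)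
            = ((j.val : ℕ) : Fin d) + ((d - j.val : ℕ) : Fin d) := by rw [Fin.cast_val_eq_self]
          _ = ((j.val + (d - j.val) : ℕ) : Fin d) := by rw [Nat.cast_add]
          _ = 0 := by rw [Nat.add_sub_cancel' (le_of_lt j.isLt), Fin.natCast_self]
      rw [hz, rSec_zero hd]
      exact Subtype.ext rfl
    · rw [Set.mem_singleton_iff] at h
      subst h
      refine ⟨gG d (d - 1 - j.val), cOf_gG _, ?_⟩
      simp only [sOf_gG]
      have h2 : ((d - 1 : ℕ) : Fin d) = -1 := by
        apply eq_neg_of_add_eq_zero_left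
        have h3 : ((d - 1 : ℕ) : Fin d) + 1 = ((d - 1 + 1 : ℕ) : Fin d) := by push_cast; ring
        rw [h3, Nat.sub_add_cancel (by omega), Fin.natCast_self]
      have hz : j + ((d - 1 - j.val : ℕ) : Fin d) = -1 := by
        calc j + ((d - 1 - j.val : ℕ) : Fin d)
            = ((j.val : ℕ) : Fin d) + ((d - 1 - j.val : ℕ) : Fin d) := by rw [Fin.cast_val_eq_self]
          _ = ((j.val + (d - 1 - j.val) : ℕ) : Fin d) := by rw [Nat.cast_add]
          _ = ((d - 1 : ℕ) : Fin d) := by congr 1; have := j.isLt; omega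
          _ = -1 := h2
      rw [hz, rSec_neg_one hd]
      exact Subtype.ext rfl
  | one =>
    exact ⟨1, cOf_one, by simp only [sOf_one]; exact Subtype.ext rfl⟩
  | mul x y hx hy ihx ihy =>
    obtain ⟨W1, hc1, hs1⟩ := ihx
    obtain ⟨W2, hc2, hs2⟩ := ihy
    refine ⟨W1 * W2, by rw [cOf_mul, hc1, hc2, add_zero], ?_⟩
    rw [sOf_mul_of_zero hc2, hs1, hs2]
    exact Subtype.ext rfl
  | inv x hx ih =>
    obtain ⟨W, hc, hs⟩ := ih
    refine ⟨W⁻¹, by rw [cOf_inv, hc, neg_zero], ?_⟩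
    rw [sOf_inv_of_zero hc, hs]
    exact Subtype.ext rfl

/-- The subgroup of elements whose "single-coordinate inflation" at every position lies in `Γ''`. -/
def DDsub (d : ℕ) [NeZero d] : Subgroup ↥(Gamma d) where
  carrier := {x | ∀ j : Fin d, ∃ h : ↥(Gamma d), h ∈ derivedSeries ↥(Gamma d) 2 ∧
    cOf h = 0 ∧ sOf h j = x ∧ ∀ k, k ≠ j → sOf h k = 1}
  one_mem' := fun j =>
    ⟨1, one_mem _, cOf_one, by simp only [sOf_one], fun k _ => by simp only [sOf_one]⟩
  mul_mem' := by
    rintro x y hx hy j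
    obtain ⟨h1, hm1, hc1, hs1, ho1⟩ := hx j
    obtain ⟨h2, hm2, hc2, hs2, ho2⟩ := hy j
    refine ⟨h1 * h2, mul_mem hm1 hm2, by rw [cOf_mul, hc1, hc2, add_zero], ?_, fun k hk => ?_⟩
    · rw [sOf_mul_of_zero hc2, hs1, hs2]
    · rw [sOf_mul_of_zero hc2, ho1 k hk, ho2 k hk, mul_one]
  inv_mem' := by
    rintro x hx j
    obtain ⟨h1, hm1, hc1, hs1, ho1⟩ := hx j
    refine ⟨h1⁻¹, inv_mem hm1, by rw [cOf_inv, hc1, neg_zero], ?_, fun k hk => ?_⟩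
    · rw [sOf_inv_of_zero hc1, hs1]
    · rw [sOf_inv_of_zero hc1, ho1 k hk, inv_one]

lemma DD_normal (hd : 5 ≤ d) : (DDsub d).Normal := by
  constructor
  intro x hx g j
  obtain ⟨W, hWc, hWs⟩ := exists_section hd (g : Equiv.Perm (List (Fin d))) g.2 j
  obtain ⟨h, hm, hc, hs, ho⟩ := hx j
  have hcW : cOf (W * h) = 0 := by rw [cOf_mul, hWc, hc, add_zero]
  have hcWinv : cOf W⁻¹ = 0 := by rw [cOf_inv, hWc, neg_zero]
  refine ⟨W * h * W⁻¹, (derivedSeries_normal _ _).conj_mem h hm W,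
    by rw [cOf_mul, hcW, hcWinv, add_zero], ?_, fun k hk => ?_⟩
  · rw [sOf_mul_of_zero hcWinv, sOf_mul_of_zero hc, sOf_inv_of_zero hWc, hs, hWs]
  · rw [sOf_mul_of_zero hcWinv, sOf_mul_of_zero hc, sOf_inv_of_zero hWc, ho k hk, mul_one,
      mul_inv_cancel]

lemma seed_mem_DD (hd : 5 ≤ d) : ⁅(rG d)⁻¹, aG d⁆ ∈ DDsub d := by
  intro j
  set A : ↥(Gamma d) := aG d ^ (j.val + 2) with hA
  have hcz : cOf (zeta d) = 0 := cOf_zeta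
  have hcA : cOf A = ((j.val + 2 : ℕ) : Fin d) := cOf_aG_pow _
  have hcAinv : cOf A⁻¹ = -((j.val + 2 : ℕ) : Fin d) := by rw [cOf_inv, hcA]
  have hcAz : cOf (A * zeta d) = ((j.val + 2 : ℕ) : Fin d) := by
    rw [cOf_mul, hcz, hcA, zero_add]
  have hsA : ∀ t, sOf A t = 1 := fun t => by rw [hA]; exact sOf_aG_pow _ t
  have hsec : ∀ k : Fin d, sOf (A * zeta d * A⁻¹) k = sOf (zeta d) (k - ((j.val + 2 : ℕ) : Fin d)) := by
    intro k
    rw [sOf_mul_apply, sOf_mul_apply, sOf_inv_apply]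
    rw [hcz, hcAinv, hcA, add_zero]
    rw [hsA, one_mul, inv_one, mul_one, sub_eq_add_neg]
  have hcast : ((j.val + 2 : ℕ) : Fin d) = j + 2 := by
    push_cast [Fin.cast_val_eq_self]
    ring
  refine ⟨A * zeta d * A⁻¹, (derivedSeries_normal _ _).conj_mem _ zeta_mem_derived_two A,
    ?_, ?_, ?_⟩
  · rw [cOf_mul, hcAz, hcAinv]
    ring
  · rw [hsec j]
    have he : j - ((j.val + 2 : ℕ) : Fin d) = -2 := by rw [hcast]; ring
    rw [he, sOf_zeta_support hd]
  · intro k hk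
    rw [hsec k]
    apply sOf_zeta_off hd
    intro hbad
    rw [hcast] at hbad
    exact hk (by linear_combination hbad)

end FG
namespace FG

variable {d : ℕ} [NeZero d]

lemma mem_closure_pair (g : ↥(Gamma d)) :
    g ∈ Subgroup.closure ({aG d, rG d} : Set ↥(Gamma d)) := by
  obtain ⟨p, hp⟩ := g
  induction hp using Subgroup.closure_induction with
  | mem x hx =>
    rcases Set.mem_insert_iff.mp hx with h | h
    · subst h
      exact Subgroup.subset_closure (Set.mem_insert_iff.mpr (Or.inl (Subtype.ext rfl)))
    · rw [Set.mem_singleton_iff] at h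
      subst h
      exact Subgroup.subset_closure
        (Set.mem_insert_iff.mpr (Or.inr (Set.mem_singleton_iff.mpr (Subtype.ext rfl))))
  | one => exact one_mem _
  | mul x y hx hy ihx ihy => exact mul_mem ihx ihy
  | inv x hx ih => exact inv_mem ih

lemma derived_one_le_DD (hd : 5 ≤ d) : derivedSeries ↥(Gamma d) 1 ≤ DDsub d := by
  have hN : (DDsub d).Normal := DD_normal hd
  rw [derived_one_eq]
  refine Subgroup.commutator_le.mpr fun g _ h _ => ?_
  set π := QuotientGroup.mk' (DDsub d) with hπ
  have hker : ∀ x : ↥(Gamma d), π x = 1 → x ∈ DDsub d := by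
    intro x hx
    rwa [← QuotientGroup.ker_mk' (DDsub d), MonoidHom.mem_ker]
  have hcomm : Commute (π (aG d)) (π (rG d)) := by
    have h1 : π ⁅(rG d)⁻¹, aG d⁆ = 1 := by
      rw [← MonoidHom.mem_ker, QuotientGroup.ker_mk']
      exact seed_mem_DD hd
    rw [map_commutatorElement] at h1
    have h2 := commutatorElement_eq_one_iff_commute.mp h1
    rw [map_inv] at h2
    exact (Commute.inv_left_iff.mp h2).symm
  have hallc : ∀ x y : ↥(Gamma d), Commute (π x) (π y) := by
    have hmemcl : ∀ x : ↥(Gamma d),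
        π x ∈ Subgroup.closure ({π (aG d), π (rG d)} : Set _) := by
      intro x
      have h1 := Subgroup.mem_map_of_mem π (mem_closure_pair x)
      rwa [MonoidHom.map_closure, Set.image_insert_eq, Set.image_singleton] at h1
    have step1 : Subgroup.closure ({π (aG d), π (rG d)} : Set _)
        ≤ Subgroup.centralizer ({π (aG d), π (rG d)} : Set _) := by
      rw [Subgroup.closure_le]
      intro z hz
      rw [SetLike.mem_coe, Subgroup.mem_centralizer_iff]
      intro w hw
      rcases Set.mem_insert_iff.mp hw with hw | hw <;>
        rcases Set.mem_insert_iff.mp hz with hz | hz <;>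
          first
          | (rw [hw, hz])
          | (rw [hw, Set.mem_singleton_iff.mp hz])
          | (rw [Set.mem_singleton_iff.mp hw, hz])
          | (rw [Set.mem_singleton_iff.mp hw, Set.mem_singleton_iff.mp hz])
      · exact hcomm.eq
      · exact hcomm.symm.eq
    have step2 : Subgroup.closure ({π (aG d), π (rG d)} : Set _)
        ≤ Subgroup.centralizer ((Subgroup.closure ({π (aG d), π (rG d)} : Set _) : Subgroup _) : Set _) := by
      rw [Subgroup.closure_le]
      intro z hz
      rw [SetLike.mem_coe, Subgroup.mem_centralizer_iff]
      intro y hy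
      exact (Subgroup.mem_centralizer_iff.mp (step1 hy) z hz).symm
    intro x y
    exact (Subgroup.mem_centralizer_iff.mp (step2 (hmemcl y)) (π x) (hmemcl x))
  apply hker
  rw [map_commutatorElement]
  exact commutatorElement_eq_one_iff_commute.mpr (hallc g h)

end FG
namespace FG

variable {d : ℕ} [NeZero d]

lemma cOf_sOf_list_prod (L : List (Fin d)) (F : Fin d → ↥(Gamma d)) (hF : ∀ j, cOf (F j) = 0) :
    cOf ((L.map F).prod) = 0 ∧
      ∀ k, sOf ((L.map F).prod) k = (L.map (fun j => sOf (F j) k)).prod := by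
  induction L with
  | nil =>
    constructor
    · simp [cOf_one]
    · intro k; simp [sOf_one]
  | cons j L ih =>
    obtain ⟨ihc, ihs⟩ := ih
    constructor
    · rw [List.map_cons, List.prod_cons, cOf_mul, ihc, hF j, add_zero]
    · intro k
      rw [List.map_cons, List.prod_cons, sOf_mul_apply, ihc, add_zero, List.map_cons,
        List.prod_cons, ihs k]

lemma prod_single_support (L : List (Fin d)) (G : Fin d → ↥(Gamma d)) (j : Fin d)
    (hG : ∀ k, k ≠ j → G k = 1) (hnd : L.Nodup) :
    (L.map G).prod = if j ∈ L then G j else 1 := by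
  induction L with
  | nil => simp
  | cons a L ih =>
    rw [List.map_cons, List.prod_cons, ih (List.nodup_cons.mp hnd).2]
    by_cases ha : a = j
    · subst ha
      rw [if_neg (List.nodup_cons.mp hnd).1, mul_one, if_pos List.mem_cons_self]
    · rw [hG a ha, one_mul]
      by_cases hj : j ∈ L
      · rw [if_pos hj, if_pos (List.mem_cons_of_mem a hj)]
      · rw [if_neg hj, if_neg (fun hmem => by
          rcases List.mem_cons.mp hmem with h | h
          · exact ha h.symm
          · exact hj h)]

lemma commutator_H_le_derived_two (hd : 5 ≤ d) :
    ⁅Hsub d, Hsub d⁆ ≤ derivedSeries ↥(Gamma d) 2 := by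
  refine Subgroup.commutator_le.mpr fun u hu v hv => ?_
  have hcu : cOf u = 0 := (mem_stab_one_iff u).mp (H_le_stab_one hu)
  have hcv : cOf v = 0 := (mem_stab_one_iff v).mp (H_le_stab_one hv)
  have hsec_mem : ∀ j, sOf ⁅u, v⁆ j ∈ derivedSeries ↥(Gamma d) 1 := by
    intro j
    rw [sOf_commutator hcu hcv, derived_one_eq]
    exact Subgroup.commutator_mem_commutator (Subgroup.mem_top _) (Subgroup.mem_top _)
  have hchoice : ∀ j, ∃ h, h ∈ derivedSeries ↥(Gamma d) 2 ∧ cOf h = 0 ∧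
      sOf h j = sOf ⁅u, v⁆ j ∧ ∀ k, k ≠ j → sOf h k = 1 :=
    fun j => (derived_one_le_DD hd (hsec_mem j)) j
  choose F hF1 hF2 hF3 hF4 using hchoice
  have hkey := cOf_sOf_list_prod (List.finRange d) F hF2
  have heq : ⁅u, v⁆ = ((List.finRange d).map F).prod := by
    apply ext_of_decomp
    · rw [hkey.1, cOf_commutator]
    · funext k
      rw [hkey.2 k, prod_single_support (List.finRange d) (fun j => sOf (F j) k) k
        (fun j hj => hF4 j k (fun h => hj h.symm)) (List.nodup_finRange d),
        if_pos (List.mem_finRange k), hF3 k]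
  rw [heq]
  exact list_prod_mem (by
    intro x hx
    obtain ⟨j, _, rfl⟩ := List.mem_map.mp hx
    exact hF1 j)

/-- The "level map" of the level-one stabiliser. -/
noncomputable def PhiH (d : ℕ) [NeZero d] : ↥(Hsub d) →* (Fin d → Multiplicative (Fin d)) where
  toFun h := fun i => Multiplicative.ofAdd (cOf (sOf (h : ↥(Gamma d)) i))
  map_one' := by
    funext i
    show Multiplicative.ofAdd (cOf (sOf (1 : ↥(Gamma d)) i)) = 1
    rw [sOf_one]
    simp [cOf_one]
  map_mul' h1 h2 := by
    funext i
    have hc2 : cOf ((h2 : ↥(Gamma d))) = 0 := (mem_stab_one_iff _).mp (H_le_stab_one h2.2)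
    show Multiplicative.ofAdd (cOf (sOf ((h1 : ↥(Gamma d)) * (h2 : ↥(Gamma d))) i)) = _
    rw [sOf_mul_of_zero hc2, cOf_mul, add_comm]
    rfl

/-- The generators of `H` as elements of `H`. -/
noncomputable def gammaH (i : Fin d) : ↥(Hsub d) := ⟨gG d i.val, gG_mem_H _⟩

lemma gG_pow_d (i : ℕ) : gG d i ^ d = 1 := by
  unfold gG
  have h1 : ((aG d ^ i)⁻¹ * rG d * aG d ^ i) ^ d
      = (aG d ^ i)⁻¹ * rG d ^ d * ((aG d ^ i)⁻¹)⁻¹ := conj_pow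
  rw [h1, rG_pow_d]
  group

lemma of_gammaH_pow_d (i : Fin d) : (Abelianization.of (gammaH i)) ^ d = 1 := by
  rw [← map_pow]
  have : gammaH i ^ d = 1 := by
    apply Subtype.ext
    show gG d i.val ^ d = 1
    exact gG_pow_d i.val
  rw [this, map_one]

lemma pow_mod_helper {M : Type*} [Monoid M] (z : M) (hz : z ^ d = 1) (k : ℕ) :
    z ^ (k % d) = z ^ k := by
  conv_rhs => rw [← Nat.mod_add_div k d, pow_add, pow_mul, hz, one_pow, mul_one]

/-- The section of the abelianisation of `H` over `(Z/d)^d`. -/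
noncomputable def omegaH (d : ℕ) [NeZero d] :
    (Fin d → Multiplicative (Fin d)) →* Abelianization ↥(Hsub d) where
  toFun v := ∏ i : Fin d, (Abelianization.of (gammaH i)) ^ ((Multiplicative.toAdd (v i)).val)
  map_one' := by simp
  map_mul' v w := by
    show (∏ i : Fin d, (Abelianization.of (gammaH i)) ^ ((Multiplicative.toAdd ((v * w) i)).val))
      = (∏ i : Fin d, (Abelianization.of (gammaH i)) ^ ((Multiplicative.toAdd (v i)).val))
        * (∏ i : Fin d, (Abelianization.of (gammaH i)) ^ ((Multiplicative.toAdd (w i)).val))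
    rw [← Finset.prod_mul_distrib]
    apply Finset.prod_congr rfl
    intro i _
    rw [← pow_add]
    have h1 : Multiplicative.toAdd ((v * w) i)
        = Multiplicative.toAdd (v i) + Multiplicative.toAdd (w i) := rfl
    rw [h1, Fin.val_add, pow_mod_helper _ (of_gammaH_pow_d i)]

lemma cOf_rSec (k : Fin d) : cOf (rSec k) = if k = 0 then 1 else 0 := by
  unfold rSec
  split_ifs with h1 h2
  · exact cOf_aG
  · exact cOf_rG
  · exact cOf_one

lemma PhiH_gammaH (i : Fin d) (j : Fin d) :
    PhiH d (gammaH i) j = if i = -j then Multiplicative.ofAdd (1 : Fin d) else 1 := by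
  show Multiplicative.ofAdd (cOf (sOf (gG d i.val) j)) = _
  rw [sOf_gG]
  show Multiplicative.ofAdd (cOf (rSec (j + (i.val : Fin d)))) = _
  rw [Fin.cast_val_eq_self, cOf_rSec]
  by_cases h : i = -j
  · rw [if_pos (by rw [h]; ring), if_pos h]
  · rw [if_neg (fun hc => h (by linear_combination hc)), if_neg h]
    rfl

lemma liftPhi_omega (v : Fin d → Multiplicative (Fin d)) :
    (Abelianization.lift (PhiH d)) (omegaH d v) = fun j => v (-j) := by
  show (Abelianization.lift (PhiH d))
      (∏ i : Fin d, (Abelianization.of (gammaH i)) ^ ((Multiplicative.toAdd (v i)).val)) = _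
  rw [map_prod]
  funext j
  rw [Finset.prod_apply]
  have hterm : ∀ i : Fin d,
      ((Abelianization.lift (PhiH d)) ((Abelianization.of (gammaH i)) ^ ((Multiplicative.toAdd (v i)).val))) j
        = if i = -j then (Multiplicative.ofAdd (1 : Fin d)) ^ ((Multiplicative.toAdd (v i)).val) else 1 := by
    intro i
    rw [map_pow, Abelianization.lift_apply_of]
    show ((PhiH d (gammaH i)) ^ ((Multiplicative.toAdd (v i)).val)) j = _
    rw [Pi.pow_apply, PhiH_gammaH]
    by_cases h : i = -j
    · rw [if_pos h, if_pos h]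
    · rw [if_neg h, if_neg h, one_pow]
  rw [Finset.prod_congr rfl (fun i _ => hterm i), Finset.prod_ite_eq' Finset.univ (-j)
    (fun i => (Multiplicative.ofAdd (1 : Fin d)) ^ ((Multiplicative.toAdd (v i)).val)),
    if_pos (Finset.mem_univ _)]
  show Multiplicative.ofAdd (((Multiplicative.toAdd (v (-j))).val) • (1 : Fin d)) = v (-j)
  rw [nsmul_eq_mul, mul_one, Fin.cast_val_eq_self]
  rfl

lemma omegaH_single (hd : 5 ≤ d) (c : Fin d) :
    omegaH d (fun k => if k = c then Multiplicative.ofAdd (1 : Fin d) else 1)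
      = Abelianization.of (gammaH c) := by
  show (∏ i : Fin d, (Abelianization.of (gammaH i)) ^
      ((Multiplicative.toAdd (if i = c then Multiplicative.ofAdd (1 : Fin d) else 1)).val)) = _
  have hterm : ∀ i : Fin d, (Abelianization.of (gammaH i)) ^
      ((Multiplicative.toAdd (if i = c then Multiplicative.ofAdd (1 : Fin d) else 1)).val)
        = if i = c then Abelianization.of (gammaH i) else 1 := by
    intro i
    by_cases h : i = c
    · rw [if_pos h, if_pos h]
      have : ((1 : Fin d) : ℕ) = 1 := by
        rw [Fin.val_one']
        exact Nat.mod_eq_of_lt (by omega)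
      show (Abelianization.of (gammaH i)) ^ ((1 : Fin d) : ℕ) = _
      rw [this, pow_one]
    · rw [if_neg h, if_neg h]
      show (Abelianization.of (gammaH i)) ^ ((0 : Fin d) : ℕ) = 1
      rw [Fin.val_zero, pow_zero]
  rw [Finset.prod_congr rfl (fun i _ => hterm i),
    Finset.prod_ite_eq' Finset.univ c (fun i => Abelianization.of (gammaH i)),
    if_pos (Finset.mem_univ _)]

lemma of_mem_range_omegaH (hd : 5 ≤ d) (h : ↥(Hsub d)) :
    Abelianization.of h ∈ (omegaH d).range := by
  obtain ⟨x, hx⟩ := h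
  induction hx using Subgroup.closure_induction with
  | mem p hp =>
    obtain ⟨i, rfl⟩ := hp
    have heq : (⟨gG d i, gG_mem_H i⟩ : ↥(Hsub d)) = gammaH ((i : ℕ) : Fin d) := by
      apply Subtype.ext
      show gG d i = gG d (((i : ℕ) : Fin d)).val
      rw [Fin.val_natCast]
      exact gG_mod i
    rw [show (⟨gG d i, _⟩ : ↥(Hsub d)) = gammaH ((i : ℕ) : Fin d) from heq,
      ← omegaH_single hd]
    exact ⟨_, rfl⟩
  | one =>
    rw [show (⟨1, _⟩ : ↥(Hsub d)) = 1 from rfl, map_one]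
    exact one_mem _
  | mul x y hx hy ihx ihy =>
    rw [show (⟨x * y, _⟩ : ↥(Hsub d)) = (⟨x, hx⟩ : ↥(Hsub d)) * (⟨y, hy⟩ : ↥(Hsub d)) from rfl,
      map_mul]
    exact mul_mem ihx ihy
  | inv x hx ih =>
    rw [show (⟨x⁻¹, _⟩ : ↥(Hsub d)) = (⟨x, hx⟩ : ↥(Hsub d))⁻¹ from rfl, map_inv]
    exact inv_mem ih

lemma stab_two_le_commutator_H (hd : 5 ≤ d) : Stab d 2 ≤ ⁅Hsub d, Hsub d⁆ := by
  intro g hg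
  obtain ⟨hc1, hc2⟩ := (mem_stab_two_iff g).mp hg
  have hgH : g ∈ Hsub d := stab_one_le_H ((mem_stab_one_iff g).mpr hc1)
  set gH : ↥(Hsub d) := ⟨g, hgH⟩ with hgHdef
  have hPhi : PhiH d gH = 1 := by
    funext i
    show Multiplicative.ofAdd (cOf (sOf g i)) = 1
    rw [hc2 i]
    rfl
  obtain ⟨v, hv⟩ := of_mem_range_omegaH hd gH
  have h1 : Abelianization.lift (PhiH d) (Abelianization.of gH) = 1 := by
    rw [Abelianization.lift_apply_of, hPhi]
  have h2 : (fun j : Fin d => v (-j)) = (1 : Fin d → Multiplicative (Fin d)) := by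
    rw [← liftPhi_omega, hv, h1]
  have hv1 : v = 1 := by
    funext k
    have h3 := congrFun h2 (-k)
    simpa using h3
  have h4 : Abelianization.of gH = 1 := by
    rw [← hv, hv1, map_one]
  have hcomm : gH ∈ _root_.commutator ↥(Hsub d) := (QuotientGroup.eq_one_iff gH).mp h4
  have h5 : g ∈ Subgroup.map (Hsub d).subtype (_root_.commutator ↥(Hsub d)) := ⟨gH, hcomm, rfl⟩
  rwa [commutator_def, Subgroup.map_commutator, ← MonoidHom.range_eq_map,
    Subgroup.range_subtype] at h5

theorem derived_two_eq_stab_two (hd : 5 ≤ d) : derivedSeries ↥(Gamma d) 2 = Stab d 2 :=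
  le_antisymm derived_two_le_stab_two
    (fun _ hg => commutator_H_le_derived_two hd (stab_two_le_commutator_H hd hg))

end FG
namespace FG

variable {d : ℕ} [NeZero d]

/-- The level map on the derived subgroup. -/
noncomputable def LambdaH (d : ℕ) [NeZero d] :
    ↥(derivedSeries ↥(Gamma d) 1) →* (Fin d → Multiplicative (Fin d)) where
  toFun x := fun i => Multiplicative.ofAdd (cOf (sOf (x : ↥(Gamma d)) i))
  map_one' := by
    funext i
    show Multiplicative.ofAdd (cOf (sOf (1 : ↥(Gamma d)) i)) = 1
    rw [sOf_one]
    simp [cOf_one]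
  map_mul' x y := by
    funext i
    have hcy : cOf ((y : ↥(Gamma d))) = 0 :=
      (mem_stab_one_iff _).mp (derived_one_le_stab_one y.2)
    show Multiplicative.ofAdd (cOf (sOf ((x : ↥(Gamma d)) * (y : ↥(Gamma d))) i)) = _
    rw [sOf_mul_of_zero hcy, cOf_mul, add_comm]
    rfl

/-- The total-displacement homomorphism. -/
noncomputable def TsumHom (d : ℕ) [NeZero d] : ↥(Gamma d) →* Multiplicative (Fin d) where
  toFun g := Multiplicative.ofAdd (∑ i : Fin d, cOf (sOf g i))
  map_one' := by
    simp only [sOf_one]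
    simp [cOf_one]
  map_mul' g h := by
    show Multiplicative.ofAdd (∑ i : Fin d, cOf (sOf (g * h) i)) = _
    rw [← ofAdd_add]
    congr 1
    have hterm : ∀ i : Fin d, cOf (sOf (g * h) i) = cOf (sOf h i) + cOf (sOf g (i + cOf h)) := by
      intro i
      rw [sOf_mul_apply, cOf_mul]
    rw [Finset.sum_congr rfl (fun i _ => hterm i), Finset.sum_add_distrib]
    have hshift : ∑ i : Fin d, cOf (sOf g (i + cOf h)) = ∑ i : Fin d, cOf (sOf g i) :=
      Fintype.sum_equiv (Equiv.addRight (cOf h)) _ _ (fun i => rfl)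
    rw [hshift, add_comm]

/-- The sum homomorphism on `(Z/d)^d`. -/
noncomputable def SsumHom (d : ℕ) [NeZero d] :
    (Fin d → Multiplicative (Fin d)) →* Multiplicative (Fin d) where
  toFun v := Multiplicative.ofAdd (∑ i : Fin d, Multiplicative.toAdd (v i))
  map_one' := by simp
  map_mul' v w := by
    show Multiplicative.ofAdd (∑ i : Fin d, Multiplicative.toAdd ((v * w) i)) = _
    rw [← ofAdd_add]
    congr 1
    rw [← Finset.sum_add_distrib]
    rfl

lemma Ssum_LambdaH (x : ↥(derivedSeries ↥(Gamma d) 1)) :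
    SsumHom d (LambdaH d x) = TsumHom d (x : ↥(Gamma d)) := rfl

lemma TsumHom_derived (x : ↥(Gamma d)) (hx : x ∈ derivedSeries ↥(Gamma d) 1) :
    TsumHom d x = 1 := by
  have h1 : derivedSeries ↥(Gamma d) 1 = _root_.commutator ↥(Gamma d) := by
    rw [commutator_def, derived_one_eq]
  rw [h1] at hx
  exact Abelianization.commutator_subset_ker (TsumHom d) hx

/-- Elementary "difference" vectors. -/
noncomputable def dvec (p q : Fin d) : Fin d → Multiplicative (Fin d) :=
  fun t => Multiplicative.ofAdd ((if t = p then (1 : Fin d) else 0) - (if t = q then 1 else 0))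

/-- The elements `g_{i+1}⁻¹ g_i` of `Γ'`. -/
noncomputable def XXel (d : ℕ) [NeZero d] (i : Fin d) : ↥(Gamma d) :=
  (gG d (i.val + 1))⁻¹ * gG d i.val

lemma XXel_eq_conj (i : Fin d) : XXel d i = (aG d ^ i.val)⁻¹ * xx1 d * aG d ^ i.val := by
  unfold XXel xx1 gG
  rw [pow_zero, pow_one, pow_succ]
  group

lemma XXel_mem_derived (i : Fin d) : XXel d i ∈ derivedSeries ↥(Gamma d) 1 := by
  rw [XXel_eq_conj]
  have h := (derivedSeries_normal ↥(Gamma d) 1).conj_mem _ xx1_mem_derived_one (aG d ^ i.val)⁻¹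
  simpa using h

lemma sOf_XXel (i : Fin d) (j : Fin d) :
    sOf (XXel d i) j = (rSec (j + i + 1))⁻¹ * rSec (j + i) := by
  unfold XXel
  rw [sOf_mul_of_zero (cOf_gG _), sOf_inv_of_zero (cOf_gG _), sOf_gG, sOf_gG]
  have h1 : ((i.val + 1 : ℕ) : Fin d) = i + 1 := by
    push_cast [Fin.cast_val_eq_self]
    ring
  show (rSec (j + ((i.val + 1 : ℕ) : Fin d)))⁻¹ * rSec (j + ((i.val : ℕ) : Fin d)) = _
  rw [h1, Fin.cast_val_eq_self, add_assoc]

lemma LambdaH_XXel (hd : 5 ≤ d) (i : Fin d) :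
    LambdaH d ⟨XXel d i, XXel_mem_derived i⟩ = dvec (-i) (-i - 1) := by
  funext j
  show Multiplicative.ofAdd (cOf (sOf (XXel d i) j)) = _
  rw [sOf_XXel, cOf_mul, cOf_inv, cOf_rSec, cOf_rSec]
  unfold dvec
  congr 1
  by_cases h1 : j = -i
  · rw [if_pos (by rw [h1]; ring), if_neg (by rw [h1]; intro hbad; exact one_ne_zero' hd (by linear_combination hbad)),
      if_pos h1, if_neg (by rw [h1]; intro hbad; exact one_ne_zero' hd (by linear_combination hbad))]
    ring
  · by_cases h2 : j = -i - 1
    · rw [if_neg (by rw [h2]; intro hbad; exact neg_one_ne_zero' hd (by linear_combination hbad)),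
        if_pos (by rw [h2]; ring), if_neg h1, if_pos h2]
      ring
    · rw [if_neg (fun hbad => h1 (by linear_combination hbad)),
        if_neg (fun hbad => h2 (by linear_combination hbad)), if_neg h1, if_neg h2]
      ring

lemma dvec_self (p : Fin d) : dvec p p = 1 := by
  funext t
  show Multiplicative.ofAdd _ = 1
  rw [sub_self]
  rfl

lemma dvec_chain (p q r : Fin d) : dvec p q * dvec q r = dvec p r := by
  funext t
  rw [Pi.mul_apply]
  unfold dvec
  rw [← ofAdd_add]
  congr 1
  ring

lemma dvec_consec_mem (hd : 5 ≤ d) (p : Fin d) : dvec p (p - 1) ∈ (LambdaH d).range := by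
  have h := LambdaH_XXel hd (-p)
  rw [neg_neg] at h
  exact ⟨_, h⟩

lemma dvec_sub_mem (hd : 5 ≤ d) (p : Fin d) (k : ℕ) :
    dvec p (p - (k : Fin d)) ∈ (LambdaH d).range := by
  induction k with
  | zero =>
    simp only [Nat.cast_zero, sub_zero, dvec_self]
    exact one_mem _
  | succ k ih =>
    have heq : dvec p (p - ((k + 1 : ℕ) : Fin d))
        = dvec p (p - (k : Fin d)) * dvec (p - (k : Fin d)) ((p - (k : Fin d)) - 1) := by
      rw [dvec_chain]
      congr 1
      push_cast
      ring
    rw [heq]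
    exact mul_mem ih (dvec_consec_mem hd _)

lemma dvec_mem (hd : 5 ≤ d) (p q : Fin d) : dvec p q ∈ (LambdaH d).range := by
  have h := dvec_sub_mem hd p (p - q).val
  rwa [Fin.cast_val_eq_self, sub_sub_cancel] at h

lemma ker_le_range (hd : 5 ≤ d) : (SsumHom d).ker ≤ (LambdaH d).range := by
  intro v hv
  have hsum : (∑ i : Fin d, Multiplicative.toAdd (v i)) = 0 := by
    have h1 : SsumHom d v = 1 := hv
    exact ofAdd_eq_one.mp h1
  have hdecomp : v = ∏ t : Fin d, (dvec t 0) ^ ((Multiplicative.toAdd (v t)).val) := by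
    funext u
    rw [Finset.prod_apply]
    have hterm : ∀ t : Fin d, ((dvec t 0) ^ ((Multiplicative.toAdd (v t)).val)) u
        = Multiplicative.ofAdd ((((Multiplicative.toAdd (v t)).val : ℕ) : Fin d)
            * ((if u = t then (1 : Fin d) else 0) - (if u = 0 then 1 else 0))) := by
      intro t
      rw [Pi.pow_apply]
      show Multiplicative.ofAdd (((Multiplicative.toAdd (v t)).val : ℕ)
          • ((if u = t then (1 : Fin d) else 0) - (if u = 0 then 1 else 0))) = _
      rw [nsmul_eq_mul]
    rw [Finset.prod_congr rfl (fun t _ => hterm t), ← ofAdd_sum]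
    show v u = _
    have hcast : ∀ t : Fin d, (((Multiplicative.toAdd (v t)).val : ℕ) : Fin d)
        = Multiplicative.toAdd (v t) := fun t => Fin.cast_val_eq_self _
    have hsplit : (∑ t : Fin d, (((Multiplicative.toAdd (v t)).val : ℕ) : Fin d)
        * ((if u = t then (1 : Fin d) else 0) - (if u = 0 then 1 else 0)))
        = Multiplicative.toAdd (v u) := by
      simp only [mul_sub, mul_ite, mul_one, mul_zero, Finset.sum_sub_distrib]
      rw [Finset.sum_ite_eq, if_pos (Finset.mem_univ u), hcast u]
      have hzero : (∑ t : Fin d, if u = 0 then (((Multiplicative.toAdd (v t)).val : ℕ) : Fin d) else 0) = 0 := by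
        by_cases h0 : u = 0
        · rw [Finset.sum_congr rfl (fun t _ => by rw [if_pos h0, hcast t])]
          exact hsum
        · rw [Finset.sum_congr rfl (fun t _ => if_neg h0)]
          exact Finset.sum_const_zero
      rw [hzero, sub_zero]
    rw [hsplit]
    rfl
  rw [hdecomp]
  exact Subgroup.prod_mem _ (fun t _ => pow_mem (dvec_mem hd t 0) _)

lemma range_eq_ker (hd : 5 ≤ d) : (LambdaH d).range = (SsumHom d).ker := by
  apply le_antisymm
  · rintro w ⟨x, rfl⟩
    have h1 : SsumHom d (LambdaH d x) = 1 := by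
      rw [Ssum_LambdaH, TsumHom_derived (x : ↥(Gamma d)) x.2]
    exact h1
  · exact ker_le_range hd

lemma Ssum_surjective : Function.Surjective (SsumHom d) := by
  intro c
  refine ⟨fun t => if t = 0 then c else 1, ?_⟩
  show Multiplicative.ofAdd (∑ i : Fin d, Multiplicative.toAdd (if i = 0 then c else 1)) = c
  have hterm : ∀ i : Fin d, Multiplicative.toAdd (if i = 0 then c else 1)
      = if i = 0 then Multiplicative.toAdd c else 0 := by
    intro i
    by_cases h : i = 0 <;> simp [h]
  rw [Finset.sum_congr rfl (fun i _ => hterm i), Finset.sum_ite_eq']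
  simp

lemma card_ker_Ssum (hd : 5 ≤ d) : Nat.card (SsumHom d).ker = d ^ (d - 1) := by
  have h1 := Subgroup.card_eq_card_quotient_mul_card_subgroup (SsumHom d).ker
  have h2 : Nat.card ((Fin d → Multiplicative (Fin d)) ⧸ (SsumHom d).ker)
      = Nat.card (Multiplicative (Fin d)) := by
    have e1 := QuotientGroup.quotientKerEquivRange (SsumHom d)
    have e2 : (SsumHom d).range = ⊤ := MonoidHom.range_eq_top.mpr Ssum_surjective
    rw [Nat.card_congr e1.toEquiv, e2, Subgroup.card_top]
  have h3 : Nat.card (Fin d → Multiplicative (Fin d)) = d ^ d := by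
    simp [Nat.card_eq_fintype_card]
  have h4 : Nat.card (Multiplicative (Fin d)) = d := by
    simp [Nat.card_eq_fintype_card]
  rw [h3, h2, h4] at h1
  have h5 : d * d ^ (d - 1) = d ^ d := by
    rw [← pow_succ']
    congr 1
    omega
  rw [← h5] at h1
  exact Nat.eq_of_mul_eq_mul_left (by omega) h1.symm

lemma subgroupOf_eq_ker (hd : 5 ≤ d) :
    (derivedSeries ↥(Gamma d) 2).subgroupOf (derivedSeries ↥(Gamma d) 1) = (LambdaH d).ker := by
  ext x
  rw [Subgroup.mem_subgroupOf, MonoidHom.mem_ker, derived_two_eq_stab_two hd, mem_stab_two_iff]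
  constructor
  · rintro ⟨-, h2⟩
    funext i
    show Multiplicative.ofAdd (cOf (sOf (x : ↥(Gamma d)) i)) = 1
    rw [h2 i]
    rfl
  · intro h
    refine ⟨(mem_stab_one_iff _).mp (derived_one_le_stab_one x.2), fun i => ?_⟩
    have h1 := congrFun h i
    exact ofAdd_eq_one.mp h1

theorem relindex_eq (hd : 5 ≤ d) :
    (derivedSeries ↥(Gamma d) 2).relIndex (derivedSeries ↥(Gamma d) 1) = d ^ (d - 1) := by
  rw [Subgroup.relIndex, subgroupOf_eq_ker hd, Subgroup.index_ker]
  rw [show (LambdaH d).range = (SsumHom d).ker from range_eq_ker hd]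
  exact card_ker_Ssum hd

end FG

/-- For every `d ≥ 5`, `Γ_d'' = Stab(2)`; consequently `[Γ_d' : Γ_d''] = d^(d-1)`. -/
theorem stmt_8 (d : ℕ) [NeZero d] (hd : 5 ≤ d) :
    derivedSeries ↥(FG.Gamma d) 2 = FG.Stab d 2 ∧
    (derivedSeries ↥(FG.Gamma d) 2).relIndex (derivedSeries ↥(FG.Gamma d) 1) = d ^ (d - 1) := by
  exact ⟨FG.derived_two_eq_stab_two hd, FG.relindex_eq hd⟩
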